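/- Let (α_n) satisfy α_n/n → −1, α_n ∉ 𝕊_n = {−n,…,−1}, and dist(α_n, 𝕊_n)^{1/n} → e^{−r} for some r ≥ 0. Then lim_{n→∞} |L_n^{(α_n)}(0)|^{1/n} = e^{−r}, where L_n^{(α)}(0) = (α+1)(α+2)⋯(α+n)/n!. -/

import Mathlib

open Finset Filter

lemma log_sub_log_le {a b : ℝ} (hb : 0 < b) (hle : b ≤ a) :
    Real.log a - Real.log b ≤ (a - b) / b := by
  have ha : 0 < a := lt_of_lt_of_le hb hle
  have h := Real.log_le_sub_one_of_pos (show (0:ℝ) < a / b by positivity)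
  rw [Real.log_div (ne_of_gt ha) (ne_of_gt hb)] at h
  have : a / b - 1 = (a - b) / b := by field_simp
  linarith [this ▸ h]

lemma sum_inv_Icc_le {a : ℕ} (ha : 1 ≤ a) : ∀ n : ℕ, a ≤ n →
    (∑ k ∈ Icc a n, (1 : ℝ) / k) ≤ 1 / a + (Real.log n - Real.log a) := by
  refine Nat.le_induction ?_ ?_
  · simp
  · intro n hn ih
    rw [← Finset.Ico_add_one_right_eq_Icc, Finset.sum_Ico_succ_top (by omega), Finset.Ico_add_one_right_eq_Icc]
    have h1 : Real.log (n + 1) - Real.log n ≥ 1 / ((n : ℝ) + 1) := by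
      have hn0 : (0:ℝ) < n := by exact_mod_cast Nat.lt_of_lt_of_le Nat.zero_lt_one (le_trans ha hn)
      have := log_sub_log_le (a := (n:ℝ)+1) (b := (n:ℝ)) hn0 (by linarith)
      -- gives log(n+1) - log n ≤ 1/n ; wrong direction. use log x ≥ 1 - 1/x style:
      have h2 := Real.log_le_sub_one_of_pos (show (0:ℝ) < (n:ℝ)/((n:ℝ)+1) by positivity)
      rw [Real.log_div (ne_of_gt hn0) (by positivity)] at h2
      have : (n:ℝ)/((n:ℝ)+1) - 1 = -(1/((n:ℝ)+1)) := by field_simp; ring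
      rw [this] at h2
      push_cast
      linarith
    have h2 : ((n:ℕ)+1 : ℕ) = ((n:ℝ) + 1 : ℝ) := by push_cast; ring
    push_cast
    push_cast at ih
    linarith

lemma log_factorial_eq : ∀ n : ℕ, Real.log (n.factorial : ℝ) = ∑ k ∈ Icc 1 n, Real.log k := by
  intro n
  induction n with
  | zero => simp
  | succ n ih =>
    rw [← Finset.Ico_add_one_right_eq_Icc, Finset.sum_Ico_succ_top (by omega), Finset.Ico_add_one_right_eq_Icc, ← ih,
      Nat.factorial_succ]
    push_cast
    rw [Real.log_mul (by positivity) (by exact_mod_cast Nat.cast_ne_zero.2 n.factorial_ne_zero)]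
    ring

lemma log_add_one_factorial : ∀ K : ℕ, (∑ k ∈ Icc 1 K, Real.log ((k:ℝ) + 1)) = Real.log ((K+1).factorial : ℝ) := by
  intro K
  induction K with
  | zero => simp
  | succ K ih =>
    rw [← Finset.Ico_add_one_right_eq_Icc, Finset.sum_Ico_succ_top (by omega), Finset.Ico_add_one_right_eq_Icc, ih,
      Nat.factorial_succ (K+1)]
    push_cast
    rw [Real.log_mul (by positivity) (by exact_mod_cast Nat.cast_ne_zero.2 (K+1).factorial_ne_zero)]
    ring

lemma log_factorial_ge : ∀ n : ℕ, (n:ℝ) * Real.log n - n ≤ Real.log (n.factorial : ℝ) := by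
  intro n
  induction n with
  | zero => simp
  | succ n ih =>
    rw [Nat.factorial_succ]
    push_cast
    rw [Real.log_mul (by positivity) (by exact_mod_cast Nat.cast_ne_zero.2 n.factorial_ne_zero)]
    rcases Nat.eq_zero_or_pos n with h | h
    · subst h; simp
    have hn0 : (0:ℝ) < n := by exact_mod_cast h
    have key : ((n:ℝ)) * (Real.log (n+1) - Real.log n) ≤ 1 := by
      have := log_sub_log_le (a := (n:ℝ)+1) (b := (n:ℝ)) hn0 (by linarith)
      have h2 : ((n:ℝ)+1 - n)/n = 1/n := by ring_nf
      calc (n:ℝ) * (Real.log (n+1) - Real.log n) ≤ n * (((n:ℝ)+1-n)/n) := by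
            apply mul_le_mul_of_nonneg_left this (le_of_lt hn0)
        _ = 1 := by field_simp; ring
    nlinarith [Real.log_nonneg (show (1:ℝ) ≤ (n:ℝ)+1 by linarith)]

lemma phi_le {a b : ℝ} (ha : 0 < a) (hab : a ≤ b) :
    a * (Real.log b - Real.log a) ≤ 2 * Real.sqrt (a * b) := by
  have hb : 0 < b := lt_of_lt_of_le ha hab
  have h1 : Real.log b - Real.log a = 2 * Real.log (Real.sqrt (b/a)) := by
    rw [Real.log_sqrt (by positivity), Real.log_div (ne_of_gt hb) (ne_of_gt ha)]
    ring
  have h2 : Real.log (Real.sqrt (b/a)) ≤ Real.sqrt (b/a) := by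
    have := Real.log_le_sub_one_of_pos (show (0:ℝ) < Real.sqrt (b/a) by positivity)
    linarith
  have h3 : a * Real.sqrt (b/a) = Real.sqrt (a*b) := by
    rw [show a * b = a^2 * (b/a) by field_simp, Real.sqrt_mul (by positivity),
      Real.sqrt_sq (le_of_lt ha)]
  calc a * (Real.log b - Real.log a) = 2 * (a * Real.log (Real.sqrt (b/a))) := by rw [h1]; ring
    _ ≤ 2 * (a * Real.sqrt (b/a)) := by
        have := mul_le_mul_of_nonneg_left h2 (le_of_lt ha); linarith
    _ = 2 * Real.sqrt (a*b) := by rw [h3]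

lemma logdev {k : ℕ} {x : ℝ} (hk : 1 ≤ k) (h1 : (k:ℝ) - 1/2 ≤ x) (h2 : x ≤ (k:ℝ) + 1/2) :
    |Real.log x - Real.log k| ≤ 1 / k := by
  have hk1 : (1:ℝ) ≤ (k:ℝ) := by exact_mod_cast hk
  have hx : (0:ℝ) < x := by linarith
  have hkpos : (0:ℝ) < k := by linarith
  rw [abs_le]
  constructor
  · rcases le_or_gt (k:ℝ) x with h | h
    · have := Real.log_le_log hkpos h
      have : (0:ℝ) < 1/k := by positivity
      linarith
    · have hb := log_sub_log_le (a := (k:ℝ)) (b := x) hx h.le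
      have h3 : ((k:ℝ) - x)/x ≤ 1/k := by
        rw [div_le_div_iff₀ hx hkpos]
        nlinarith
      linarith
  · rcases le_or_gt x (k:ℝ) with h | h
    · have := Real.log_le_log hx h
      have : (0:ℝ) < 1/k := by positivity
      linarith
    · have hb := log_sub_log_le (a := x) (b := (k:ℝ)) hkpos h.le
      have h3 : (x - (k:ℝ))/(k:ℝ) ≤ 1/k := by
        rw [div_le_div_iff₀ hkpos hkpos]
        nlinarith
      linarith

-- harmonic-type bound, allowing K = 0
lemma sum_inv_le {K n : ℕ} (hK : K ≤ n) (hn : 1 ≤ n) :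
    (∑ k ∈ Icc 1 K, (1 : ℝ) / k) ≤ 1 + Real.log n := by
  rcases Nat.eq_zero_or_pos K with h | h
  · subst h
    simp
    have := Real.log_nonneg (show (1:ℝ) ≤ n from Nat.one_le_cast.2 hn)
    linarith
  · have h0 := sum_inv_Icc_le (a := 1) le_rfl K h
    have h2 : Real.log K ≤ Real.log n := by
      apply Real.log_le_log (by exact_mod_cast h) (by exact_mod_cast hK)
    simp only [Nat.cast_one, Real.log_one, one_div] at h0 ⊢
    norm_num at h0
    linarith

lemma sum_logdev {K n : ℕ} (f : ℕ → ℝ) (hK : K ≤ n) (hn : 1 ≤ n)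
    (h : ∀ k ∈ Icc 1 K, |f k - Real.log k| ≤ 1 / (k:ℝ)) :
    |(∑ k ∈ Icc 1 K, f k) - Real.log (K.factorial : ℝ)| ≤ 1 + Real.log n := by
  rw [log_factorial_eq, ← Finset.sum_sub_distrib]
  calc |∑ k ∈ Icc 1 K, (f k - Real.log k)| ≤ ∑ k ∈ Icc 1 K, |f k - Real.log k| :=
        Finset.abs_sum_le_sum_abs _ _
    _ ≤ ∑ k ∈ Icc 1 K, (1:ℝ)/k := Finset.sum_le_sum h
    _ ≤ 1 + Real.log n := sum_inv_le hK hn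

lemma log_choose_le {n s : ℕ} (hs : s ≤ n) (hn : 1 ≤ n) :
    Real.log ((n-1).choose s : ℝ) ≤ s + 2 * Real.sqrt ((s:ℝ) * n) := by
  rcases Nat.eq_zero_or_pos s with h | h
  · subst h; simp
  · have hs1 : (1:ℝ) ≤ (s:ℝ) := Nat.one_le_cast.2 h
    have hsn : (s:ℝ) ≤ (n:ℝ) := Nat.cast_le.2 hs
    have hd : ((n-1).choose s : ℝ) * (s.factorial : ℝ) ≤ (n:ℝ)^s := by
      have h1 : s.factorial * (n-1).choose s ≤ (n:ℕ) ^ s :=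
        le_trans (le_of_eq (Nat.descFactorial_eq_factorial_mul_choose (n-1) s).symm)
          (le_trans (Nat.descFactorial_le_pow _ _) (Nat.pow_le_pow_left (by omega) s))
      calc ((n-1).choose s : ℝ) * (s.factorial : ℝ) = ((s.factorial * (n-1).choose s : ℕ) : ℝ) := by
            push_cast; ring
        _ ≤ (((n:ℕ)^s : ℕ) : ℝ) := Nat.cast_le.2 h1
        _ = (n:ℝ)^s := by push_cast; ring
    have hcpos : (0:ℝ) < ((n-1).choose s : ℝ) ∨ ((n-1).choose s : ℝ) = 0 := by
      rcases Nat.eq_zero_or_pos ((n-1).choose s) with h2 | h2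
      · right; exact_mod_cast h2
      · left; exact_mod_cast h2
    rcases hcpos with hc | hc
    · have hfpos : (0:ℝ) < (s.factorial : ℝ) := by exact_mod_cast s.factorial_pos
      have hlog : Real.log ((n-1).choose s : ℝ) + Real.log (s.factorial : ℝ)
          ≤ (s:ℝ) * Real.log n := by
        rw [← Real.log_mul (ne_of_gt hc) (ne_of_gt hfpos)]
        calc Real.log (((n-1).choose s : ℝ) * (s.factorial : ℝ)) ≤ Real.log ((n:ℝ)^s) :=
              Real.log_le_log (by positivity) hd
          _ = (s:ℝ) * Real.log n := by rw [Real.log_pow]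
      have hfl : (s:ℝ) * Real.log s - s ≤ Real.log (s.factorial : ℝ) := log_factorial_ge s
      have hphi : (s:ℝ) * (Real.log n - Real.log s) ≤ 2 * Real.sqrt ((s:ℝ)*n) :=
        phi_le (by linarith) hsn
      nlinarith
    · rw [hc]; simp; positivity

lemma partA_arith {dd : ℝ} {D : ℕ} (hd2 : 1/2 < dd) (hD1 : 1 ≤ D)
    (hDge : dd ≤ (D:ℝ)) (hDlt : (D:ℝ) < dd + 1) :
    ((D-1:ℕ):ℝ) * Real.log (2*dd) - Real.log (D.factorial : ℝ) ≤ 2*dd + 2 := by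
  have hd0 : 0 < dd := by linarith
  have hXcast : ((D-1:ℕ):ℝ) = (D:ℝ) - 1 := by
    push_cast [Nat.cast_sub hD1]; ring
  have hX1 : (1:ℝ) ≤ (D:ℝ) := Nat.one_le_cast.2 hD1
  have hlf := log_factorial_ge D
  have hlogDd : Real.log dd ≤ Real.log (D:ℝ) := Real.log_le_log hd0 hDge
  have hexp : Real.log (2*dd) = Real.log 2 + Real.log dd :=
    Real.log_mul (by norm_num) (ne_of_gt hd0)
  have hlog2 : Real.log 2 ≤ 1 := by
    have := Real.log_le_sub_one_of_pos (show (0:ℝ) < 2 by norm_num)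
    linarith
  have hlogdd_lb : -(Real.log 2) ≤ Real.log dd := by
    have h1 : Real.log (1/2 : ℝ) ≤ Real.log dd :=
      Real.log_le_log (by norm_num) (by linarith)
    rw [show (1/2 : ℝ) = 2⁻¹ by norm_num, Real.log_inv] at h1
    exact h1
  have e2 : (D:ℝ) * Real.log dd ≤ (D:ℝ) * Real.log (D:ℝ) :=
    mul_le_mul_of_nonneg_left hlogDd (by linarith)
  have e3 : ((D:ℝ)-1) * Real.log 2 ≤ (D:ℝ) - 1 := by nlinarith
  rw [hXcast, hexp]
  nlinarith

lemma roundpt {n : ℕ} {t : ℝ} (h1 : 1 ≤ t) (h2 : t ≤ n) :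
    ∃ j ∈ Icc 1 n, |t - (j:ℝ)| ≤ 1/2 := by
  refine ⟨⌊t + 1/2⌋₊, ?_, ?_⟩
  · rw [mem_Icc]
    have hfl : (⌊t + 1/2⌋₊ : ℝ) ≤ t + 1/2 := Nat.floor_le (by linarith)
    constructor
    · exact Nat.le_floor (by push_cast; linarith)
    · by_contra h
      have h3 : ((n+1:ℕ):ℝ) ≤ (⌊t + 1/2⌋₊ : ℝ) := Nat.cast_le.2 (by omega)
      push_cast at h3
      linarith
  · have hfl : (⌊t + 1/2⌋₊ : ℝ) ≤ t + 1/2 := Nat.floor_le (by linarith)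
    have hfl2 : t + 1/2 < (⌊t + 1/2⌋₊ : ℝ) + 1 := Nat.lt_floor_add_one _
    rw [abs_le]
    constructor <;> linarith

-- core estimate
set_option maxHeartbeats 2000000 in
lemma core {n : ℕ} {t dd : ℝ} (hn : 2 ≤ n) (ht : 1 ≤ t)
    (hne : ∀ j ∈ Icc 1 n, t - (j:ℝ) ≠ 0)
    (hleast : IsLeast {x : ℝ | ∃ j ∈ Icc 1 n, x = |t - (j:ℝ)|} dd)
    (hEn : |t - (n:ℝ)| + 1/2 ≤ n) :
    |(∑ j ∈ Icc 1 n, Real.log |t - (j:ℝ)|) - Real.log (n.factorial : ℝ) - Real.log dd|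
      ≤ 5 + 3*Real.log n + 3*(|t - (n:ℝ)| + 1/2) + 4*Real.sqrt ((|t - (n:ℝ)| + 1/2) * n) := by
  obtain ⟨⟨m, hm, hdm⟩, hlb⟩ := hleast
  have hmin : ∀ j ∈ Icc 1 n, dd ≤ |t - (j:ℝ)| := fun j hj => hlb ⟨j, hj, rfl⟩
  have hm1 : 1 ≤ m := (mem_Icc.1 hm).1
  have hmn : m ≤ n := (mem_Icc.1 hm).2
  have hd0 : 0 < dd := hdm ▸ abs_pos.2 (hne m hm)
  set E : ℝ := |t - (n:ℝ)| + 1/2 with hE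
  have hE0 : (0:ℝ) < E := by positivity
  have hdE : dd ≤ E := le_trans (hmin n (mem_Icc.2 ⟨by omega, le_rfl⟩)) (by rw [hE]; linarith)
  have hn1R : (1:ℝ) ≤ (n:ℝ) := by exact_mod_cast (by omega : 1 ≤ n)
  have hlogn0 : 0 ≤ Real.log n := Real.log_nonneg hn1R
  have hsqrtE : 0 ≤ Real.sqrt (E * n) := Real.sqrt_nonneg _
  have habs : -dd ≤ t - (m:ℝ) ∧ t - (m:ℝ) ≤ dd := abs_le.1 (le_of_eq hdm.symm)
  by_cases hd2 : dd ≤ 1/2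
  · -- CASE 1
    set s : ℕ := n - m with hs
    have hscast : (s:ℝ) = (n:ℝ) - m := by rw [hs]; push_cast [Nat.cast_sub hmn]; ring
    have hsn : s ≤ n := by omega
    have hsE : (s:ℝ) ≤ E := by
      have h1 : (n:ℝ) - t ≤ |t - (n:ℝ)| := by
        rw [abs_sub_comm]; exact le_abs_self _
      rw [hscast, hE]; linarith [habs.1]
    -- split the sum
    have hsplit : (∑ j ∈ Icc 1 n, Real.log |t - (j:ℝ)|)
        = (∑ k ∈ Icc 1 (m-1), Real.log |t - ((m - k : ℕ):ℝ)|) + Real.log |t - (m:ℝ)|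
          + (∑ k ∈ Icc 1 s, Real.log |t - ((m + k : ℕ):ℝ)|) := by
      have e1 : Icc 1 n = Ioc 0 n := by rw [← Finset.Icc_add_one_left_eq_Ioc]; simp
      have e2 : Icc 1 m = Ioc 0 m := by rw [← Finset.Icc_add_one_left_eq_Ioc]; simp
      rw [e1, ← Finset.sum_Ioc_consecutive _ (Nat.zero_le m) hmn]
      congr 1
      · -- Ioc 0 m = Icc 1 (m-1) + point m, then reflect
        have hm' : m = (m-1) + 1 := by omega
        rw [hm', Finset.sum_Ioc_succ_top (Nat.zero_le _), ← hm', ← Finset.Icc_add_one_left_eq_Ioc]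
        congr 1
        apply Finset.sum_nbij' (fun j => m - j) (fun k => m - k)
        · intro a ha; rw [mem_Icc] at *; omega
        · intro a ha; rw [mem_Icc] at *; omega
        · intro a ha; rw [mem_Icc] at ha; omega
        · intro a ha; rw [mem_Icc] at ha; omega
        · intro a ha
          rw [mem_Icc] at ha
          have e : m - (m - a) = a := by omega
          rw [e]
      · apply Finset.sum_nbij' (fun j => j - m) (fun k => m + k)
        · intro a ha; rw [mem_Ioc] at ha; rw [mem_Icc]; omega
        · intro a ha; rw [mem_Icc] at ha; rw [mem_Ioc]; omega
        · intro a ha; rw [mem_Ioc] at ha; omega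
        · intro a ha; rw [mem_Icc] at ha; omega
        · intro a ha
          rw [mem_Ioc] at ha
          have e : m + (a - m) = a := by omega
          rw [e]
    have hbL : |(∑ k ∈ Icc 1 (m-1), Real.log |t - ((m - k : ℕ):ℝ)|)
        - Real.log ((m-1).factorial : ℝ)| ≤ 1 + Real.log n := by
      apply sum_logdev _ (by omega) (by omega)
      intro k hk
      rw [mem_Icc] at hk
      have hcast : ((m - k : ℕ):ℝ) = (m:ℝ) - k := by
        push_cast [Nat.cast_sub (by omega : k ≤ m)]; ring
      have hk1R : (1:ℝ) ≤ (k:ℝ) := Nat.one_le_cast.2 hk.1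
      have hxpos : 0 < (t - (m:ℝ)) + k := by linarith [habs.1]
      have habsx : |t - ((m-k:ℕ):ℝ)| = (t - (m:ℝ)) + k := by
        rw [hcast, show t - ((m:ℝ) - k) = (t - (m:ℝ)) + k by ring, abs_of_pos hxpos]
      rw [habsx]
      exact logdev hk.1 (by linarith [habs.1]) (by linarith [habs.2])
    have hbR : |(∑ k ∈ Icc 1 s, Real.log |t - ((m + k : ℕ):ℝ)|)
        - Real.log (s.factorial : ℝ)| ≤ 1 + Real.log n := by
      apply sum_logdev _ hsn (by omega)
      intro k hk
      rw [mem_Icc] at hk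
      have hk1R : (1:ℝ) ≤ (k:ℝ) := Nat.one_le_cast.2 hk.1
      have hxneg : (t - (m:ℝ)) - k < 0 := by linarith [habs.2]
      have habsx : |t - ((m+k:ℕ):ℝ)| = (k:ℝ) - (t - (m:ℝ)) := by
        push_cast
        rw [show t - ((m:ℝ) + k) = (t - (m:ℝ)) - k by ring, abs_of_neg hxneg]
        ring
      rw [habsx]
      exact logdev hk.1 (by linarith [habs.2]) (by linarith [habs.1])
    have hsn1 : s ≤ n - 1 := by omega
    have hchoosepos : 0 < (n-1).choose s := Nat.choose_pos hsn1
    have hfacid : (n.factorial : ℝ)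
        = (n:ℝ) * ((n-1).choose s : ℝ) * ((m-1).factorial : ℝ) * (s.factorial : ℝ) := by
      have h1 : (n-1).choose s * s.factorial * (m-1).factorial = (n-1).factorial := by
        have h0 := Nat.choose_mul_factorial_mul_factorial hsn1
        have e : n - 1 - s = m - 1 := by omega
        rw [e] at h0; exact h0
      have h2 : n * (n-1).factorial = n.factorial := Nat.mul_factorial_pred (by omega)
      have h3 : n.factorial = n * ((n-1).choose s * s.factorial * (m-1).factorial) := by
        rw [h1, h2]
      have h4 : (n.factorial : ℝ)
          = ((n * ((n-1).choose s * s.factorial * (m-1).factorial) : ℕ) : ℝ) := by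
        exact_mod_cast congrArg (fun x : ℕ => (x:ℝ)) h3
      rw [h4]; push_cast; ring
    have hlogfac : Real.log (n.factorial : ℝ) = Real.log n + Real.log ((n-1).choose s : ℝ)
        + Real.log ((m-1).factorial:ℝ) + Real.log (s.factorial:ℝ) := by
      rw [hfacid]
      rw [Real.log_mul (by positivity) (by exact_mod_cast s.factorial_ne_zero),
        Real.log_mul (by positivity) (by exact_mod_cast (m-1).factorial_ne_zero),
        Real.log_mul (by positivity) (by exact_mod_cast Nat.pos_iff_ne_zero.1 hchoosepos)]
    have hC0 : 0 ≤ Real.log ((n-1).choose s : ℝ) :=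
      Real.log_nonneg (Nat.one_le_cast.2 hchoosepos)
    have hCle : Real.log ((n-1).choose s : ℝ) ≤ s + 2 * Real.sqrt ((s:ℝ) * n) :=
      log_choose_le hsn (by omega)
    have hsqrts : Real.sqrt ((s:ℝ)*n) ≤ Real.sqrt (E*n) :=
      Real.sqrt_le_sqrt (mul_le_mul_of_nonneg_right hsE (by positivity))
    have hsqrts0 : 0 ≤ Real.sqrt ((s:ℝ)*n) := Real.sqrt_nonneg _
    have hs0 : (0:ℝ) ≤ (s:ℝ) := Nat.cast_nonneg _
    rw [hsplit, hlogfac, ← hdm]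
    have h5 := abs_le.1 hbL
    have h6 := abs_le.1 hbR
    rw [abs_le]
    constructor
    · linarith
    · linarith
  · -- CASE 2 : 1/2 < dd
    push_neg at hd2
    have htn : (n:ℝ) < t := by
      by_contra hle
      push_neg at hle
      obtain ⟨j, hj, hjle⟩ := roundpt ht hle
      have := hmin j hj
      linarith
    have hnmem : n ∈ Icc 1 n := mem_Icc.2 ⟨by omega, le_rfl⟩
    have hdd_eq : dd = t - n := by
      have h1 : dd ≤ t - n := by
        have := hmin n hnmem
        rwa [abs_of_pos (by linarith)] at this
      have hmlen : (m:ℝ) ≤ n := Nat.cast_le.2 hmn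
      have h2 : t - (m:ℝ) = dd := by
        rw [hdm, abs_of_pos (by linarith)]
      linarith
    have hddn : dd ≤ (n:ℝ) := by
      have h9 : E ≤ (n:ℝ) := hEn
      linarith [hdE]
    have hterm : ∀ j ∈ Icc 1 n, Real.log |t - (j:ℝ)| = Real.log (((n - j : ℕ):ℝ) + dd) := by
      intro j hj
      rw [mem_Icc] at hj
      have hcast : ((n - j : ℕ):ℝ) = (n:ℝ) - j := by
        push_cast [Nat.cast_sub hj.2]; ring
      have hjR : (j:ℝ) ≤ n := Nat.cast_le.2 hj.2
      rw [hcast, abs_of_pos (by linarith), hdd_eq]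
      ring_nf
    obtain ⟨p, rfl⟩ : ∃ p, n = p + 1 := ⟨n - 1, by omega⟩
    have hp1 : 1 ≤ p := by omega
    have hsum1 : (∑ j ∈ Icc 1 (p+1), Real.log |t - (j:ℝ)|)
        = ∑ i ∈ range (p+1), Real.log ((i:ℝ) + dd) := by
      rw [Finset.sum_congr rfl hterm]
      apply Finset.sum_nbij' (fun j => p + 1 - j) (fun i => p + 1 - i)
      · intro a ha; rw [mem_Icc] at ha; rw [mem_range]; omega
      · intro a ha; rw [mem_range] at ha; rw [mem_Icc]; omega
      · intro a ha; rw [mem_Icc] at ha; omega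
      · intro a ha; rw [mem_range] at ha; omega
      · intro a ha; rfl
    have hsum2 : Real.log ((p+1).factorial : ℝ) = ∑ i ∈ range (p+1), Real.log ((i:ℝ) + 1) := by
      rw [log_factorial_eq, show Icc 1 (p+1) = Ico 1 (p+1+1) from (Finset.Ico_add_one_right_eq_Icc 1 (p+1)).symm,
        Finset.sum_Ico_eq_sum_range]
      refine Finset.sum_congr (by congr 1) fun i _ => by push_cast; ring_nf
    have hFG : (∑ j ∈ Icc 1 (p+1), Real.log |t - (j:ℝ)|) - Real.log ((p+1).factorial : ℝ) - Real.log dd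
        = ∑ k ∈ Icc 1 p, (Real.log ((k:ℝ) + dd) - Real.log ((k:ℝ) + 1)) := by
      rw [hsum1, hsum2, ← Finset.sum_sub_distrib, Finset.sum_range_succ']
      rw [show Icc 1 p = Ico 1 (p+1) from (Finset.Ico_add_one_right_eq_Icc 1 p).symm,
        Finset.sum_Ico_eq_sum_range]
      simp only [Nat.add_sub_cancel]
      have : ∀ i ∈ range p, (Real.log ((((i+1):ℕ):ℝ) + dd) - Real.log ((((i+1):ℕ):ℝ) + 1))
          = (Real.log (((1+i:ℕ):ℝ) + dd) - Real.log (((1+i:ℕ):ℝ) + 1)) := by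
        intro i _
        rw [show 1 + i = i + 1 by omega]
      rw [Finset.sum_congr rfl this]
      push_cast
      simp [Real.log_one]
    rw [hFG]
    -- lower bound
    have hlow : -(1 + Real.log ((p:ℝ)+1))
        ≤ ∑ k ∈ Icc 1 p, (Real.log ((k:ℝ) + dd) - Real.log ((k:ℝ) + 1)) := by
      have h : ∀ k ∈ Icc 1 p, -(1/(k:ℝ)) ≤ Real.log ((k:ℝ) + dd) - Real.log ((k:ℝ) + 1) := by
        intro k hk
        rw [mem_Icc] at hk
        have hk1 : (1:ℝ) ≤ (k:ℝ) := Nat.one_le_cast.2 hk.1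
        rcases le_or_gt 1 dd with hc | hc
        · have hlogle : Real.log ((k:ℝ)+1) ≤ Real.log ((k:ℝ)+dd) :=
            Real.log_le_log (by linarith) (by linarith)
          have : (0:ℝ) < 1/(k:ℝ) := by positivity
          linarith
        · have hb := log_sub_log_le (a := (k:ℝ)+1) (b := (k:ℝ)+dd) (by linarith) (by linarith)
          have h2 : ((k:ℝ)+1 - ((k:ℝ)+dd))/((k:ℝ)+dd) ≤ 1/(k:ℝ) := by
            rw [div_le_div_iff₀ (by linarith) (by linarith)]
            nlinarith
          linarith
      have h3 := Finset.sum_le_sum h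
      rw [Finset.sum_neg_distrib] at h3
      have h4 : (∑ k ∈ Icc 1 p, (1:ℝ)/k) ≤ 1 + Real.log ((p:ℝ)+1) := by
        have := sum_inv_le (K := p) (n := p+1) (by omega) (by omega)
        push_cast at this
        exact this
      linarith
    -- upper bound
    obtain ⟨D, hD1, hDge, hDlt⟩ : ∃ D : ℕ, 1 ≤ D ∧ dd ≤ (D:ℝ) ∧ (D:ℝ) < dd + 1 := by
      refine ⟨⌈dd⌉₊, ?_, Nat.le_ceil dd, Nat.ceil_lt_add_one hd0.le⟩
      rw [Nat.one_le_iff_ne_zero]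
      intro h0
      have := Nat.ceil_eq_zero.1 h0
      linarith
    have hub : ∀ k ∈ Icc 1 p, Real.log ((k:ℝ) + dd) - Real.log ((k:ℝ) + 1)
        ≤ (if (k:ℝ) < dd then Real.log (2*dd) - Real.log ((k:ℝ)+1) else dd/(k:ℝ)) := by
      intro k hk
      rw [mem_Icc] at hk
      have hk1 : (1:ℝ) ≤ (k:ℝ) := Nat.one_le_cast.2 hk.1
      split_ifs with hc
      · have : Real.log ((k:ℝ)+dd) ≤ Real.log (2*dd) :=
          Real.log_le_log (by linarith) (by linarith)
        linarith
      · push_neg at hc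
        have hb := log_sub_log_le (a := (k:ℝ)+dd) (b := (k:ℝ)) (by linarith) (by linarith)
        have h2 : ((k:ℝ)+dd - k)/(k:ℝ) = dd/(k:ℝ) := by ring_nf
        have h3 : Real.log ((k:ℝ)) ≤ Real.log ((k:ℝ)+1) :=
          Real.log_le_log (by linarith) (by linarith)
        rw [h2] at hb
        linarith
    have hsplit2 : ∑ k ∈ Icc 1 p, (Real.log ((k:ℝ) + dd) - Real.log ((k:ℝ) + 1))
        ≤ (∑ k ∈ (Icc 1 p).filter (fun k : ℕ => (k:ℝ) < dd), (Real.log (2*dd) - Real.log ((k:ℝ)+1)))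
          + (∑ k ∈ (Icc 1 p).filter (fun k : ℕ => ¬ ((k:ℝ) < dd)), dd/(k:ℝ)) := by
      calc ∑ k ∈ Icc 1 p, (Real.log ((k:ℝ) + dd) - Real.log ((k:ℝ) + 1))
          ≤ ∑ k ∈ Icc 1 p, (if (k:ℝ) < dd then Real.log (2*dd) - Real.log ((k:ℝ)+1) else dd/(k:ℝ)) :=
            Finset.sum_le_sum hub
        _ = _ := by
            rw [← Finset.sum_filter_add_sum_filter_not (Icc 1 p) (fun k : ℕ => (k:ℝ) < dd)]
            congr 1
            · exact Finset.sum_congr rfl fun k hk => if_pos (Finset.mem_filter.1 hk).2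
            · exact Finset.sum_congr rfl fun k hk => if_neg (Finset.mem_filter.1 hk).2
    have hPartA : (∑ k ∈ (Icc 1 p).filter (fun k : ℕ => (k:ℝ) < dd),
        (Real.log (2*dd) - Real.log ((k:ℝ)+1))) ≤ 2*dd + 2 := by
      have hsub : (Icc 1 p).filter (fun k : ℕ => (k:ℝ) < dd) ⊆ Icc 1 (D-1) := by
        intro k hk
        rw [Finset.mem_filter, mem_Icc] at hk
        rw [mem_Icc]
        have : k < D := by
          by_contra hcon
          push_neg at hcon
          have : (D:ℝ) ≤ k := Nat.cast_le.2 hcon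
          linarith [hk.2]
        omega
      have hbig : (∑ k ∈ (Icc 1 p).filter (fun k : ℕ => (k:ℝ) < dd),
          (Real.log (2*dd) - Real.log ((k:ℝ)+1)))
          ≤ ∑ k ∈ Icc 1 (D-1), (Real.log (2*dd) - Real.log ((k:ℝ)+1)) := by
        apply Finset.sum_le_sum_of_subset_of_nonneg hsub
        intro k hk _
        rw [mem_Icc] at hk
        have hD2 : 2 ≤ D := by omega
        have hk1 : (1:ℝ) ≤ (k:ℝ) := Nat.one_le_cast.2 hk.1
        have hkD : (k:ℝ) + 1 ≤ (D:ℝ) := by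
          have : k + 1 ≤ D := by omega
          exact_mod_cast this
        have hdd1 : (1:ℝ) ≤ dd := by
          have : (2:ℝ) ≤ (D:ℝ) := by exact_mod_cast hD2
          linarith
        have : Real.log ((k:ℝ)+1) ≤ Real.log (2*dd) :=
          Real.log_le_log (by linarith) (by linarith)
        linarith
      have heq : ∑ k ∈ Icc 1 (D-1), (Real.log (2*dd) - Real.log ((k:ℝ)+1))
          = ((D-1:ℕ):ℝ) * Real.log (2*dd) - Real.log (D.factorial : ℝ) := by
        rw [Finset.sum_sub_distrib, Finset.sum_const, Nat.card_Icc]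
        rw [log_add_one_factorial (D-1), show D - 1 + 1 = D by omega]
        simp [nsmul_eq_mul]
      have harith := partA_arith hd2 hD1 hDge hDlt
      linarith
    have hsqrtdd : Real.sqrt (dd*((p:ℝ)+1)) ≤ Real.sqrt (E*((p:ℝ)+1)) :=
      Real.sqrt_le_sqrt (mul_le_mul_of_nonneg_right hdE (by positivity))
    have hsqrtdd0 : 0 ≤ Real.sqrt (dd*((p:ℝ)+1)) := Real.sqrt_nonneg _
    have hPartB : (∑ k ∈ (Icc 1 p).filter (fun k : ℕ => ¬ ((k:ℝ) < dd)), dd/(k:ℝ))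
        ≤ 1 + 2*Real.sqrt (dd*((p:ℝ)+1)) := by
      by_cases hDp : D ≤ p
      · have hsub : (Icc 1 p).filter (fun k : ℕ => ¬ ((k:ℝ) < dd)) ⊆ Icc D p := by
          intro k hk
          rw [Finset.mem_filter, mem_Icc] at hk
          rw [mem_Icc]
          push_neg at hk
          refine ⟨?_, hk.1.2⟩
          have hc1 : (D:ℝ) < (k:ℝ) + 1 := by linarith [hk.2]
          have hc2 : D < k + 1 := by exact_mod_cast hc1
          omega
        have h1 : (∑ k ∈ (Icc 1 p).filter (fun k : ℕ => ¬ ((k:ℝ) < dd)), dd/(k:ℝ))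
            ≤ ∑ k ∈ Icc D p, dd/(k:ℝ) := by
          apply Finset.sum_le_sum_of_subset_of_nonneg hsub
          intro k hk _
          rw [mem_Icc] at hk
          have : (0:ℝ) < (k:ℝ) := by
            have : 1 ≤ k := by omega
            exact_mod_cast this
          positivity
        have h2 : ∑ k ∈ Icc D p, dd/(k:ℝ) = dd * ∑ k ∈ Icc D p, (1:ℝ)/(k:ℝ) := by
          rw [Finset.mul_sum]
          exact Finset.sum_congr rfl fun k _ => by ring
        have h3 := sum_inv_Icc_le hD1 p hDp
        have hD0R : (0:ℝ) < (D:ℝ) := by exact_mod_cast hD1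
        have h4 : dd * (∑ k ∈ Icc D p, (1:ℝ)/(k:ℝ))
            ≤ dd * (1/(D:ℝ) + (Real.log p - Real.log D)) :=
          mul_le_mul_of_nonneg_left h3 hd0.le
        have h5 : dd * (1/(D:ℝ)) ≤ 1 := by
          rw [mul_one_div]
          exact div_le_one_of_le₀ hDge (by linarith)
        have h6 : Real.log (p:ℝ) ≤ Real.log ((p:ℝ)+1) := by
          apply Real.log_le_log (by exact_mod_cast hp1) (by linarith)
        have hlogDd2 : Real.log dd ≤ Real.log (D:ℝ) := Real.log_le_log hd0 hDge
        have h7 : dd * (Real.log p - Real.log D) ≤ dd * (Real.log ((p:ℝ)+1) - Real.log dd) := by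
          apply mul_le_mul_of_nonneg_left ?_ hd0.le
          linarith
        have h8 : dd * (Real.log ((p:ℝ)+1) - Real.log dd) ≤ 2*Real.sqrt (dd*((p:ℝ)+1)) := by
          apply phi_le hd0
          push_cast at hddn
          linarith
        calc (∑ k ∈ (Icc 1 p).filter (fun k : ℕ => ¬ ((k:ℝ) < dd)), dd/(k:ℝ))
            ≤ ∑ k ∈ Icc D p, dd/(k:ℝ) := h1
          _ = dd * ∑ k ∈ Icc D p, (1:ℝ)/(k:ℝ) := h2
          _ ≤ dd * (1/(D:ℝ) + (Real.log p - Real.log D)) := h4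
          _ = dd * (1/(D:ℝ)) + dd * (Real.log p - Real.log D) := by ring
          _ ≤ 1 + 2*Real.sqrt (dd*((p:ℝ)+1)) := by linarith
      · have : (Icc 1 p).filter (fun k : ℕ => ¬ ((k:ℝ) < dd)) = ∅ := by
          rw [Finset.filter_eq_empty_iff]
          intro k hk
          rw [mem_Icc] at hk
          push_neg
          have hkD : k < D := by omega
          have : (k:ℝ) < D := by exact_mod_cast hkD
          have hDd : (D:ℝ) - 1 < dd := by linarith
          have : (k:ℝ) ≤ (D:ℝ) - 1 := by
            have : k + 1 ≤ D := by omega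
            have := (Nat.cast_le (α := ℝ)).2 this
            push_cast at this
            linarith
          linarith
        rw [this]
        simp
        positivity
    -- final assembly for case 2
    have hsqE' : Real.sqrt (E*((p:ℝ)+1)) = Real.sqrt (E * ((p+1:ℕ):ℝ)) := by push_cast; ring_nf
    have hlogn' : Real.log (((p+1:ℕ)):ℝ) = Real.log ((p:ℝ)+1) := by push_cast; ring_nf
    rw [abs_le]
    constructor
    · push_cast
      linarith
    · have htot : ∑ k ∈ Icc 1 p, (Real.log ((k:ℝ) + dd) - Real.log ((k:ℝ) + 1))
          ≤ 2*dd + 3 + 2*Real.sqrt (dd*((p:ℝ)+1)) := by linarith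
      push_cast
      have hsq2 : Real.sqrt (dd*((p:ℝ)+1)) ≤ Real.sqrt (E*((p:ℝ)+1)) := hsqrtdd
      have hE' : E = |t - ((p:ℝ)+1)| + 1/2 := by rw [hE]; push_cast; ring_nf
      have hsqE0 : 0 ≤ Real.sqrt (E*((p:ℝ)+1)) := Real.sqrt_nonneg _
      have hlog0 : 0 ≤ Real.log ((p:ℝ)+1) := Real.log_nonneg (by push_cast; linarith)
      linarith [hdE]

/-- If `α_n/n → −1`, `α_n ∉ 𝕊_n = {−n,…,−1}`, and `dist(α_n, 𝕊_n)^{1/n} → e^{−r}` for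
some `r ≥ 0` (where `dist(α, 𝕊_n) = min_{1≤j≤n} |α + j|`), then
`|L_n^{(α_n)}(0)|^{1/n} = (|∏_{j=1}^n (α_n+j)|/n!)^{1/n} → e^{−r}`. -/
theorem laguerre_at_zero_root_limit (α : ℕ → ℝ) (r : ℝ) (hr : 0 ≤ r) (d : ℕ → ℝ)
    (hS : ∀ n : ℕ, ∀ j ∈ Finset.Icc 1 n, α n + j ≠ 0)
    (hlim : Tendsto (fun n : ℕ => α n / n) atTop (nhds (-1)))
    (hd : ∀ n : ℕ, 1 ≤ n → IsLeast {x : ℝ | ∃ j ∈ Finset.Icc 1 n, x = |α n + j|} (d n))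
    (hdist : Tendsto (fun n : ℕ => d n ^ ((1 : ℝ) / n)) atTop (nhds (Real.exp (-r)))) :
    Tendsto (fun n : ℕ =>
        (|∏ j ∈ Finset.Icc 1 n, (α n + j)| / (Nat.factorial n)) ^ ((1 : ℝ) / n))
      atTop (nhds (Real.exp (-r))) := by
  classical
  have hd_pos : ∀ n : ℕ, 1 ≤ n → 0 < d n := by
    intro n hn
    obtain ⟨⟨j, hj, hdj⟩, -⟩ := hd n hn
    rw [hdj]
    exact abs_pos.2 (hS n j hj)
  have hlogd : Tendsto (fun n : ℕ => (1/(n:ℝ)) * Real.log (d n)) atTop (nhds (-r)) := by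
    have hcont : Tendsto (fun n : ℕ => Real.log (d n ^ ((1:ℝ)/n))) atTop
        (nhds (Real.log (Real.exp (-r)))) :=
      (Real.continuousAt_log (ne_of_gt (Real.exp_pos _))).tendsto.comp hdist
    rw [Real.log_exp] at hcont
    apply hcont.congr'
    filter_upwards [eventually_ge_atTop 1] with n hn
    rw [Real.log_rpow (hd_pos n hn)]
  set L : ℕ → ℝ := fun n => (∑ j ∈ Icc 1 n, Real.log |α n + j|) - Real.log (n.factorial : ℝ)
    with hLdef
  set Ef : ℕ → ℝ := fun n => |α n + n| + 1/2 with hEfdef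
  have hEf_pos : ∀ n, 0 < Ef n := fun n => by rw [hEfdef]; positivity
  -- eventual smallness from hlim
  have hev : ∀ᶠ n : ℕ in atTop, |α n / n + 1| < 1/4 := by
    have := Metric.tendsto_nhds.1 hlim (1/4) (by norm_num)
    simpa [Real.dist_eq, sub_neg_eq_add] using this
  -- eventual core bound
  have hFbound : ∀ᶠ n : ℕ in atTop,
      |L n - Real.log (d n)| ≤ 5 + 3*Real.log n + 3*(Ef n) + 4*Real.sqrt ((Ef n) * n) := by
    filter_upwards [hev, eventually_ge_atTop 2] with n hsm hn2
    have hnR : (2:ℝ) ≤ (n:ℝ) := by exact_mod_cast hn2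
    have habs : |α n + n| ≤ (n:ℝ)/4 := by
      have h1 : |α n / n + 1| * n ≤ (1/4) * n := by
        apply mul_le_mul_of_nonneg_right (le_of_lt hsm) (by linarith)
      have h2 : |α n / n + 1| * n = |α n + n| := by
        rw [← abs_of_pos (show (0:ℝ) < n by linarith), ← abs_mul]
        congr 1
        field_simp
        rw [abs_of_pos (show (0:ℝ) < n by linarith)]; ring
      linarith [h2 ▸ h1]
    have habs2 : -(α n) - n ≤ (n:ℝ)/4 ∧ -(n:ℝ)/4 ≤ -(α n) - n := by
      have := abs_le.1 habs
      constructor <;> linarith [this.1, this.2]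
    have ht1 : (1:ℝ) ≤ -(α n) := by linarith [habs2.2]
    have hne : ∀ j ∈ Icc 1 n, (-(α n)) - (j:ℝ) ≠ 0 := by
      intro j hj h0
      exact hS n j hj (by linarith [sub_eq_zero.1 h0])
    have hsetEq : ∀ j : ℕ, |(-(α n)) - (j:ℝ)| = |α n + j| := by
      intro j
      rw [show (-(α n)) - (j:ℝ) = -(α n + j) by ring, abs_neg]
    have hleast : IsLeast {x : ℝ | ∃ j ∈ Icc 1 n, x = |(-(α n)) - (j:ℝ)|} (d n) := by
      obtain ⟨⟨j, hj, hdj⟩, hlb⟩ := hd n (by omega)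
      constructor
      · exact ⟨j, hj, by rw [hsetEq j, ← hdj]⟩
      · rintro x ⟨j, hj, rfl⟩
        exact hlb ⟨j, hj, hsetEq j⟩
    have hEeq : |(-(α n)) - (n:ℝ)| = |α n + n| := hsetEq n
    have hEn : |(-(α n)) - (n:ℝ)| + 1/2 ≤ (n:ℝ) := by
      rw [hEeq]; linarith
    have hcore := core hn2 ht1 hne hleast hEn
    have hsumeq : (∑ j ∈ Icc 1 n, Real.log |(-(α n)) - (j:ℝ)|)
        = ∑ j ∈ Icc 1 n, Real.log |α n + j| := by
      exact Finset.sum_congr rfl fun j _ => by rw [hsetEq j]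
    rw [hsumeq, hEeq] at hcore
    simpa [hLdef, hEfdef] using hcore
  -- limit of Ef n / n
  have hEfn : Tendsto (fun n : ℕ => Ef n / n) atTop (nhds 0) := by
    have h1 : Tendsto (fun n : ℕ => |α n / n + 1| + (1/2) * (1/(n:ℝ))) atTop (nhds 0) := by
      have ha : Tendsto (fun n : ℕ => |α n / n + 1|) atTop (nhds 0) := by
        have := hlim.add (tendsto_const_nhds (x := (1:ℝ)))
        rw [show (-1:ℝ) + 1 = 0 by ring] at this
        have habs := this.abs
        rwa [abs_zero] at habs
      have hb : Tendsto (fun n : ℕ => (1/2 : ℝ) * (1/(n:ℝ))) atTop (nhds 0) := by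
        have := tendsto_one_div_atTop_nhds_zero_nat (𝕜 := ℝ)
        have h2 := this.const_mul (1/2 : ℝ)
        rwa [mul_zero] at h2
      have := ha.add hb
      rwa [add_zero] at this
    apply h1.congr'
    filter_upwards [eventually_ge_atTop 1] with n hn
    have hnR : (0:ℝ) < n := by exact_mod_cast hn
    rw [hEfdef]
    simp only
    rw [show |α n + n| = |α n / n + 1| * n by
      rw [← abs_of_pos hnR, ← abs_mul]; congr 1; field_simp; rw [abs_of_pos hnR]; ring]
    field_simp
  -- M tends to 0
  have hM : Tendsto (fun n : ℕ => 5*(1/(n:ℝ)) + 3*(Real.log n/n) + 3*(Ef n/n)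
      + 4*Real.sqrt (Ef n/n)) atTop (nhds 0) := by
    have h1 : Tendsto (fun n : ℕ => (5:ℝ)*(1/(n:ℝ))) atTop (nhds 0) := by
      have := tendsto_one_div_atTop_nhds_zero_nat.const_mul (5:ℝ)
      rwa [mul_zero] at this
    have h2 : Tendsto (fun n : ℕ => (3:ℝ)*(Real.log n/n)) atTop (nhds 0) := by
      have hlog : Tendsto (fun x : ℝ => Real.log x / x) atTop (nhds 0) :=
        Real.isLittleO_log_id_atTop.tendsto_div_nhds_zero
      have := (hlog.comp tendsto_natCast_atTop_atTop).const_mul (3:ℝ)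
      rwa [mul_zero] at this
    have h3 : Tendsto (fun n : ℕ => (3:ℝ)*(Ef n/n)) atTop (nhds 0) := by
      have := hEfn.const_mul (3:ℝ)
      rwa [mul_zero] at this
    have h4 : Tendsto (fun n : ℕ => (4:ℝ)*Real.sqrt (Ef n/n)) atTop (nhds 0) := by
      have hsq : Tendsto (fun n : ℕ => Real.sqrt (Ef n/n)) atTop (nhds (Real.sqrt 0)) :=
        (Real.continuous_sqrt.tendsto 0).comp hEfn
      rw [Real.sqrt_zero] at hsq
      have := hsq.const_mul (4:ℝ)
      rwa [mul_zero] at this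
    have := ((h1.add h2).add h3).add h4
    simpa using this
  -- F/n tends to 0
  have hF0 : Tendsto (fun n : ℕ => (1/(n:ℝ)) * (L n - Real.log (d n))) atTop (nhds 0) := by
    apply squeeze_zero_norm' ?_ hM
    filter_upwards [hFbound, eventually_ge_atTop 2] with n hb hn2
    have hnR : (2:ℝ) ≤ (n:ℝ) := by exact_mod_cast hn2
    have hnpos : (0:ℝ) < n := by linarith
    have hsqrt_eq : Real.sqrt (Ef n * n) = Real.sqrt (Ef n / n) * n := by
      rw [show Ef n * n = (Ef n / n) * n^2 by field_simp,
        Real.sqrt_mul (by positivity), Real.sqrt_sq (by positivity)]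
    rw [Real.norm_eq_abs, abs_mul, abs_of_pos (show (0:ℝ) < 1/(n:ℝ) by positivity)]
    rw [hsqrt_eq] at hb
    have h5 : |L n - Real.log (d n)| / n ≤ (5 + 3*Real.log n + 3*(Ef n)
        + 4*(Real.sqrt (Ef n/n) * n)) / n := by
      gcongr
    calc (1/(n:ℝ)) * |L n - Real.log (d n)| = |L n - Real.log (d n)| / n := by ring
      _ ≤ (5 + 3*Real.log n + 3*(Ef n) + 4*(Real.sqrt (Ef n/n) * n)) / n := h5
      _ = 5*(1/(n:ℝ)) + 3*(Real.log n/n) + 3*(Ef n/n) + 4*Real.sqrt (Ef n/n) := by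
          field_simp
  -- main log limit
  have hmain : Tendsto (fun n : ℕ => (1/(n:ℝ)) * L n) atTop (nhds (-r)) := by
    have := hF0.add hlogd
    rw [zero_add] at this
    apply this.congr
    intro n
    ring
  -- exponentiate
  have hexp : Tendsto (fun n : ℕ => Real.exp ((1/(n:ℝ)) * L n)) atTop
      (nhds (Real.exp (-r))) := (Real.continuous_exp.tendsto _).comp hmain
  apply hexp.congr'
  filter_upwards [eventually_ge_atTop 1] with n hn
  have hprodne : (∏ j ∈ Icc 1 n, (α n + j)) ≠ 0 :=
    Finset.prod_ne_zero_iff.2 fun j hj => hS n j hj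
  have hPpos : (0:ℝ) < |∏ j ∈ Icc 1 n, (α n + j)| / (n.factorial : ℝ) := by
    apply div_pos (abs_pos.2 hprodne)
    exact_mod_cast n.factorial_pos
  rw [Real.rpow_def_of_pos hPpos]
  congr 1
  rw [Real.log_div (abs_ne_zero.2 hprodne) (by exact_mod_cast n.factorial_ne_zero)]
  rw [Finset.abs_prod, Real.log_prod (fun j hj => abs_ne_zero.2 (hS n j hj))]
  rw [hLdef]
  simp only
  ring
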